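/- For every finite graph G, the chromatic spectrum Σ_χ(G) = {χ(G,σ) : σ a signature on G} is an interval of integers, i.e., Σ_χ(G) = {k ∈ ℕ : m_χ(G) ≤ k ≤ M_χ(G)} where m_χ(G) and M_χ(G) are its minimum and maximum; likewise Σ_{χ±}(G) = {χ±(G,σ) : σ a signature on G} equals {k ∈ ℕ : m_{χ±}(G) ≤ k ≤ M_{χ±}(G)}. -/

import Mathlib

open SimpleGraph

/-- `|x|_k`: the circular distance of `x` from `0` in `ℤ/kℤ`, i.e.
`min([x]_k, [-x]_k)` where `[x]_k` is the remainder of `x` modulo `k`. -/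
def cdist (k : ℕ) (x : ℤ) : ℤ :=
  min (x % (k : ℤ)) ((-x) % (k : ℤ))

/-- A `(k,d)`-coloring of a signed graph `(G, σ)`: a map `c : V → ℤ_k`
(represented by integers in `[0, k)`) with `d ≤ |c u − σ(uv)·c v|_k` for every
edge `uv`. -/
def IsKDColoring {V : Type*} (G : SimpleGraph V) (σ : Sym2 V → ℤˣ) (k d : ℕ)
    (c : V → ℤ) : Prop :=
  (∀ v, 0 ≤ c v ∧ c v < (k : ℤ)) ∧
    ∀ u v : V, G.Adj u v → (d : ℤ) ≤ cdist k (c u - (σ s(u, v) : ℤ) * c v)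

/-- The (modular) chromatic number of `(G, σ)`: the least `k` (with `k ≥ 2`)
such that `(G, σ)` has a `(k,1)`-coloring. -/
noncomputable def chiMod {V : Type*} (G : SimpleGraph V) (σ : Sym2 V → ℤˣ) : ℕ :=
  sInf {k : ℕ | 2 ≤ k ∧ ∃ c : V → ℤ, IsKDColoring G σ k 1 c}

/-- The circular chromatic number of `(G, σ)`: the infimum of `k/d` over all
pairs `(k, d)` of positive integers with `2d ≤ k` such that `(G, σ)` has a
`(k,d)`-coloring. -/
noncomputable def circChrom {V : Type*} (G : SimpleGraph V) (σ : Sym2 V → ℤˣ) : ℝ :=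
  sInf {r : ℝ | ∃ k d : ℕ, 0 < d ∧ 2 * d ≤ k ∧ r = (k : ℝ) / (d : ℝ) ∧
    ∃ c : V → ℤ, IsKDColoring G σ k d c}

/-- The color set `M_n` of Máčajová–Raspaud–Škoviera:
`M_{2k} = {±1, …, ±k}` and `M_{2k+1} = {0, ±1, …, ±k}`. -/
def Mset (n : ℕ) : Set ℤ :=
  {x : ℤ | 2 * |x| ≤ (n : ℤ) ∧ (x = 0 → Odd n)}

/-- An `n`-coloring of a signed graph `(G, σ)`. -/
def IsPMColoring {V : Type*} (G : SimpleGraph V) (σ : Sym2 V → ℤˣ) (n : ℕ)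
    (c : V → ℤ) : Prop :=
  (∀ v, c v ∈ Mset n) ∧ ∀ u v : V, G.Adj u v → c u ≠ (σ s(u, v) : ℤ) * c v

/-- The signed chromatic number `χ±`. -/
noncomputable def chiPM {V : Type*} (G : SimpleGraph V) (σ : Sym2 V → ℤˣ) : ℕ :=
  sInf {n : ℕ | ∃ c : V → ℤ, IsPMColoring G σ n c}

section ChromaticSpectrumAux

variable {V : Type*}

lemma dvd_small {K X : ℤ} (h : K ∣ X) (h2 : |X| < K) : X = 0 := by
  rcases h with ⟨c, rfl⟩
  rcases eq_or_ne c 0 with rfl | hc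
  · ring
  · exfalso
    have h1 : 1 ≤ |c| := Int.one_le_abs (by exact hc)
    have hK : 0 < K := lt_of_le_of_lt (abs_nonneg _) h2
    have : K ≤ |K * c| := by
      rw [abs_mul, abs_of_pos hK]
      nlinarith
    omega

lemma one_le_cdist {k : ℕ} (hk : 0 < k) {x : ℤ} : (1:ℤ) ≤ cdist k x ↔ ¬ (k:ℤ) ∣ x := by
  have hk' : (0:ℤ) < k := by exact_mod_cast hk
  unfold cdist
  rw [le_min_iff]
  constructor
  · rintro ⟨h1, h2⟩ ⟨c, rfl⟩
    simp [Int.mul_emod_right] at h1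
  · intro h
    constructor
    · have := Int.emod_nonneg x (ne_of_gt hk')
      rcases eq_or_lt_of_le this with he | hl
      · exfalso; exact h (Int.dvd_of_emod_eq_zero he.symm)
      · omega
    · have := Int.emod_nonneg (-x) (ne_of_gt hk')
      rcases eq_or_lt_of_le this with he | hl
      · exfalso
        have : (k:ℤ) ∣ -x := Int.dvd_of_emod_eq_zero he.symm
        exact h ((dvd_neg).mp this)
      · omega

lemma mem_chiModSet (G : SimpleGraph V) (σ : Sym2 V → ℤˣ) {k : ℕ} (hk : 2 ≤ k) (c₀ : V → ℤ)
    (h : ∀ u v, G.Adj u v → ¬ (k:ℤ) ∣ (c₀ u - (σ s(u,v) : ℤ) * c₀ v)) :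
    k ∈ {k : ℕ | 2 ≤ k ∧ ∃ c : V → ℤ, IsKDColoring G σ k 1 c} := by
  have hk0 : (0:ℤ) < (k:ℤ) := by exact_mod_cast (by omega : 0 < k)
  refine ⟨hk, fun v => c₀ v % k, fun v => ⟨Int.emod_nonneg _ (ne_of_gt hk0), Int.emod_lt_of_pos _ hk0⟩, ?_⟩
  intro u v huv
  simp only [Nat.cast_one]
  rw [one_le_cdist (by omega : 0 < k)]
  intro hdvd
  apply h u v huv
  have h1 : (c₀ u % k) ≡ c₀ u [ZMOD k] := Int.emod_emod_of_dvd _ dvd_rfl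
  have h2 : (c₀ v % k) ≡ c₀ v [ZMOD k] := Int.emod_emod_of_dvd _ dvd_rfl
  have h3 : (c₀ u % k - (σ s(u,v) : ℤ) * (c₀ v % k)) ≡ (c₀ u - (σ s(u,v) : ℤ) * c₀ v) [ZMOD k] :=
    h1.sub (h2.mul_left _)
  have h4 := dvd_add h3.dvd hdvd
  rwa [sub_add_cancel] at h4

lemma chiModSet_nonempty [Fintype V] (G : SimpleGraph V) (σ : Sym2 V → ℤˣ) :
    (2 * Fintype.card V + 2) ∈ {k : ℕ | 2 ≤ k ∧ ∃ c : V → ℤ, IsKDColoring G σ k 1 c} := by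
  classical
  set N := Fintype.card V with hN
  apply mem_chiModSet G σ (by omega) (fun v => ((Fintype.equivFin V v : ℕ) : ℤ) + 1)
  intro u v huv hdvd
  have hne : ((Fintype.equivFin V u : ℕ) : ℤ) ≠ ((Fintype.equivFin V v : ℕ) : ℤ) := by
    simp only [ne_eq, Nat.cast_inj, Fin.val_eq_val, EmbeddingLike.apply_eq_iff_eq]
    exact G.ne_of_adj huv
  have hu : ((Fintype.equivFin V u : ℕ) : ℤ) < N := by exact_mod_cast (Fintype.equivFin V u).isLt
  have hv : ((Fintype.equivFin V v : ℕ) : ℤ) < N := by exact_mod_cast (Fintype.equivFin V v).isLt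
  have hu0 : (0:ℤ) ≤ ((Fintype.equivFin V u : ℕ) : ℤ) := by positivity
  have hv0 : (0:ℤ) ≤ ((Fintype.equivFin V v : ℕ) : ℤ) := by positivity
  have hcast : ((2 * N + 2 : ℕ) : ℤ) = 2 * (N:ℤ) + 2 := by push_cast; ring
  rw [hcast] at hdvd
  rcases Int.units_eq_one_or (σ s(u,v)) with hσ | hσ <;> rw [hσ] at hdvd <;>
    simp only [Units.val_one, Units.val_neg, one_mul, neg_mul] at hdvd
  · have := dvd_small hdvd (by rw [abs_lt]; omega)
    omega
  · have := dvd_small hdvd (by rw [abs_lt]; omega)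
    omega

lemma chiMod_spec [Fintype V] (G : SimpleGraph V) (σ : Sym2 V → ℤˣ) :
    2 ≤ chiMod G σ ∧ ∃ c : V → ℤ, IsKDColoring G σ (chiMod G σ) 1 c :=
  Nat.sInf_mem ⟨_, chiModSet_nonempty G σ⟩

lemma chiMod_le_bound [Fintype V] (G : SimpleGraph V) (σ : Sym2 V → ℤˣ) :
    chiMod G σ ≤ 2 * Fintype.card V + 2 :=
  Nat.sInf_le (chiModSet_nonempty G σ)


lemma chiMod_le (G : SimpleGraph V) (σ : Sym2 V → ℤˣ) {k : ℕ} (hk : 2 ≤ k) (c₀ : V → ℤ)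
    (h : ∀ u v, G.Adj u v → ¬ (k:ℤ) ∣ (c₀ u - (σ s(u,v) : ℤ) * c₀ v)) :
    chiMod G σ ≤ k :=
  Nat.sInf_le (mem_chiModSet G σ hk c₀ h)

lemma stepMod [Fintype V] (G : SimpleGraph V) (σ σ' : Sym2 V → ℤˣ) (a : Sym2 V)
    (hagree : ∀ x, x ≠ a → σ x = σ' x) : chiMod G σ ≤ chiMod G σ' + 1 := by
  classical
  obtain ⟨hk2, c, hbnd, hcol⟩ := chiMod_spec G σ'
  set k := chiMod G σ' with hkdef
  have hndvd : ∀ x y, G.Adj x y → ¬ (k:ℤ) ∣ (c x - (σ' s(x,y) : ℤ) * c y) := by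
    intro x y hxy
    have h := hcol x y hxy
    simp only [Nat.cast_one] at h
    exact (one_le_cdist (by omega)).mp h
  induction a using Sym2.ind with
  | h u v =>
  by_cases hadj : G.Adj u v
  case neg =>
    -- signatures agree on all edges
    have hσeq : ∀ x y, G.Adj x y → σ s(x,y) = σ' s(x,y) := by
      intro x y hxy
      apply hagree
      intro h
      rcases Sym2.eq_iff.mp h with ⟨rfl, rfl⟩ | ⟨rfl, rfl⟩
      · exact hadj hxy
      · exact hadj hxy.symm
    have : chiMod G σ ≤ k := by
      apply chiMod_le G σ hk2 c
      intro x y hxy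
      rw [hσeq x y hxy]
      exact hndvd x y hxy
    omega
  case pos =>
  have hk0 : (0:ℤ) < (k:ℤ) := by exact_mod_cast (by omega : 0 < k)
  set t : ℤ := ((k / 2 : ℕ) : ℤ) with htdef
  have ht1 : 2 * t ≤ (k:ℤ) := by
    rw [htdef]
    have : 2 * (k/2) ≤ k := by omega
    exact_mod_cast this
  have ht2 : (k:ℤ) ≤ 2 * t + 1 := by
    rw [htdef]
    have : k ≤ 2 * (k/2) + 1 := by omega
    exact_mod_cast this
  have ht0 : 1 ≤ t := by
    rw [htdef]
    have : 1 ≤ k/2 := by omega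
    exact_mod_cast this
  set ψ : V → ℤ := fun x => if c x ≤ t then c x else c x - k with hψdef
  have hψl : ∀ x, t - (k:ℤ) + 1 ≤ ψ x := by
    intro x
    simp only [hψdef]
    split
    · have := (hbnd x).1; linarith
    · have := (hbnd x).1; push_neg at *; linarith
  have hψu : ∀ x, ψ x ≤ t := by
    intro x
    simp only [hψdef]
    split
    · assumption
    · have := (hbnd x).2; linarith
  have hψabs : ∀ x, |ψ x| ≤ t := by
    intro x
    rw [abs_le]
    exact ⟨by have := hψl x; linarith, hψu x⟩
  have hψmod : ∀ x, (k:ℤ) ∣ (c x - ψ x) := by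
    intro x
    simp only [hψdef]
    split
    · simp
    · simp
  have hψcon : ∀ x y, G.Adj x y → ¬ (k:ℤ) ∣ (ψ x - (σ' s(x,y) : ℤ) * ψ y) := by
    intro x y hxy hdvd
    apply hndvd x y hxy
    have h5 : (k:ℤ) ∣ ((c x - ψ x) - (σ' s(x,y) : ℤ) * (c y - ψ y)) :=
      dvd_sub (hψmod x) ((hψmod y).mul_left _)
    have := dvd_add hdvd h5
    have e : c x - (σ' s(x,y) : ℤ) * c y = (ψ x - (σ' s(x,y) : ℤ) * ψ y) + ((c x - ψ x) - (σ' s(x,y) : ℤ) * (c y - ψ y)) := by ring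
    rw [e]; exact this
  set α : ℤ := t - k with hαdef
  set R : V → Prop := fun w => ψ w = t ∧ G.Adj u w ∧ (σ s(u,w) : ℤ) = -1 ∧ 2 * t = (k:ℤ)
    with hRdef
  set c₂ : V → ℤ := fun x => if x = u ∨ R x then α else ψ x with hc₂def
  have hc2u : ∀ x, (x = u ∨ R x) → c₂ x = α := by
    intro x h; simp only [hc₂def]; rw [if_pos h]
  have hc2n : ∀ x, ¬(x = u ∨ R x) → c₂ x = ψ x := by
    intro x h; simp only [hc₂def]; rw [if_neg h]
  set P : V → V → Prop := fun x y =>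
    (c₂ x - (σ s(x,y) : ℤ) * c₂ y) ≠ 0 ∧ |c₂ x - (σ s(x,y) : ℤ) * c₂ y| ≤ (k:ℤ) with hPdef
  have hσeq2 : ∀ x y, x ≠ u → y ≠ u → (σ s(x,y) : ℤ) = (σ' s(x,y) : ℤ) := by
    intro x y hx hy
    rw [hagree]
    intro h
    rcases Sym2.eq_iff.mp h with ⟨rfl, rfl⟩ | ⟨rfl, rfl⟩
    · exact hx rfl
    · exact hy rfl
  have hsym : ∀ x y, P x y → P y x := by
    intro x y ⟨h1, h2⟩
    have hs : s(y,x) = s(x,y) := Sym2.eq_swap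
    rcases Int.units_eq_one_or (σ s(x,y)) with hσ | hσ
    · constructor
      · rw [hs, hσ]
        rw [hσ] at h1
        simp only [Units.val_one, one_mul] at *
        intro h; apply h1; linarith [h]
      · rw [hs, hσ]
        rw [hσ] at h2
        simp only [Units.val_one, one_mul] at *
        rw [abs_sub_comm]
        exact h2
    · constructor
      · rw [hs, hσ]
        rw [hσ] at h1
        simp only [Units.val_neg, Units.val_one, neg_mul, one_mul, sub_neg_eq_add] at *
        intro h; apply h1; linarith [h]
      · rw [hs, hσ]
        rw [hσ] at h2
        simp only [Units.val_neg, Units.val_one, neg_mul, one_mul, sub_neg_eq_add] at *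
        rw [add_comm]
        exact h2
  have hε : ∀ (e : Sym2 V), (σ e : ℤ) = 1 ∨ (σ e : ℤ) = -1 := by
    intro e
    rcases Int.units_eq_one_or (σ e) with h | h <;> rw [h] <;> simp
  have caseA : ∀ x y, G.Adj x y → (x = u ∨ R x) → ¬(y = u ∨ R y) → P x y := by
    intro x y hxy mx my
    have hcx := hc2u x mx
    have hcy := hc2n y my
    have hy_u : y ≠ u := fun h => my (Or.inl h)
    have hψy := abs_le.mp (hψabs y)
    simp only [hPdef]
    rcases hε s(x,y) with hσ1 | hσ1
    · have hX : c₂ x - (σ s(x,y) : ℤ) * c₂ y = α - ψ y := by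
        rw [hcx, hcy, hσ1]; ring
      rw [hX]
      constructor
      · intro h0; have := hψl y; simp only [hαdef] at h0; linarith
      · rw [abs_le]; constructor <;> simp only [hαdef] <;> [linarith [hψy.2]; linarith [hψy.1]]
    · have hX : c₂ x - (σ s(x,y) : ℤ) * c₂ y = α + ψ y := by
        rw [hcx, hcy, hσ1]; ring
      rw [hX]
      constructor
      · intro h0
        have hψyu := hψu y
        have hψyt : ψ y = t := by simp only [hαdef] at h0; linarith
        have h2t : 2 * t = (k:ℤ) := by simp only [hαdef] at h0; linarith
        rcases mx with rfl | hRx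
        · exact my (Or.inr ⟨hψyt, hxy, hσ1, h2t⟩)
        · obtain ⟨hψx, hux, hσux, h2t'⟩ := hRx
          apply hψcon x y hxy
          have heq : ψ x - (σ' s(x,y) : ℤ) * ψ y = (k:ℤ) := by
            rw [← hσeq2 x y hux.ne' hy_u, hσ1, hψx, hψyt]; linarith
          rw [heq]
      · rw [abs_le]; constructor <;> simp only [hαdef] <;> [linarith [hψy.1]; linarith [hψy.2]]
  have caseBoth : ∀ x y, G.Adj x y → (x = u ∨ R x) → (y = u ∨ R y) → P x y := by
    intro x y hxy mx my
    simp only [hPdef]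
    rcases mx with hxu | hRx
    · rcases my with hyu | hRy
      · exact absurd (hxu.trans hyu.symm) hxy.ne
      · subst hxu
        have hX : c₂ x - (σ s(x,y) : ℤ) * c₂ y = -(k:ℤ) := by
          rw [hc2u x (Or.inl rfl), hc2u y (Or.inr hRy), hRy.2.2.1, hαdef]
          have := hRy.2.2.2; linarith
        rw [hX]
        refine ⟨neg_ne_zero.mpr (ne_of_gt hk0), ?_⟩
        rw [abs_neg, abs_of_pos hk0]
    · rcases my with hyu | hRy
      · subst hyu
        have hX : c₂ x - (σ s(x,y) : ℤ) * c₂ y = -(k:ℤ) := by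
          rw [hc2u x (Or.inr hRx), hc2u y (Or.inl rfl),
            show s(x,y) = s(y,x) from Sym2.eq_swap, hRx.2.2.1, hαdef]
          have := hRx.2.2.2; linarith
        rw [hX]
        refine ⟨neg_ne_zero.mpr (ne_of_gt hk0), ?_⟩
        rw [abs_neg, abs_of_pos hk0]
      · exfalso
        have hx_u : x ≠ u := hRx.2.1.ne'
        have hy_u : y ≠ u := hRy.2.1.ne'
        apply hψcon x y hxy
        rw [← hσeq2 x y hx_u hy_u]
        rcases hε s(x,y) with hσ1 | hσ1
        · rw [hσ1, hRx.1, hRy.1]; simp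
        · rw [hσ1, hRx.1, hRy.1]
          have h2t := hRx.2.2.2
          rw [show t - (-1 : ℤ) * t = 2 * t by ring, h2t]
  have caseNone : ∀ x y, G.Adj x y → ¬(x = u ∨ R x) → ¬(y = u ∨ R y) → P x y := by
    intro x y hxy mx my
    have hx_u : x ≠ u := fun h => mx (Or.inl h)
    have hy_u : y ≠ u := fun h => my (Or.inl h)
    simp only [hPdef]
    rw [hc2n x mx, hc2n y my]
    have hcon := hψcon x y hxy
    rw [← hσeq2 x y hx_u hy_u] at hcon
    constructor
    · intro h0; exact hcon (h0 ▸ dvd_zero _)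
    · have h1 := abs_le.mp (hψabs x)
      have h2 := abs_le.mp (hψabs y)
      rcases hε s(x,y) with hσ1 | hσ1 <;> rw [hσ1] <;> rw [abs_le] <;>
        constructor <;> [skip; skip; skip; skip] <;> nlinarith [h1.1, h1.2, h2.1, h2.2]
  have key : ∀ x y, G.Adj x y → P x y := by
    intro x y hxy
    by_cases mx : x = u ∨ R x <;> by_cases my : y = u ∨ R y
    · exact caseBoth x y hxy mx my
    · exact caseA x y hxy mx my
    · exact hsym y x (caseA y x hxy.symm my mx)
    · exact caseNone x y hxy mx my
  have : chiMod G σ ≤ k + 1 := by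
    apply chiMod_le G σ (by omega) c₂
    intro x y hxy hdvd
    obtain ⟨h0, habs⟩ := key x y hxy
    apply h0
    have hdvd' : ((k:ℤ) + 1) ∣ (c₂ x - (σ s(x,y) : ℤ) * c₂ y) := by exact_mod_cast hdvd
    exact dvd_small hdvd' (by linarith)
  exact this

lemma chiPMSet_nonempty [Fintype V] (G : SimpleGraph V) (σ : Sym2 V → ℤˣ) :
    (2 * Fintype.card V) ∈ {n : ℕ | ∃ c : V → ℤ, IsPMColoring G σ n c} := by
  classical
  set N := Fintype.card V with hN
  refine ⟨fun v => ((Fintype.equivFin V v : ℕ) : ℤ) + 1, fun v => ?_, ?_⟩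
  · dsimp only
    constructor
    · have h1 : ((Fintype.equivFin V v : ℕ) : ℤ) < N := by exact_mod_cast (Fintype.equivFin V v).isLt
      have h0 : (0:ℤ) ≤ ((Fintype.equivFin V v : ℕ) : ℤ) := by positivity
      rw [abs_of_pos (by linarith)]
      push_cast
      linarith
    · intro h
      have h0 : (0:ℤ) ≤ ((Fintype.equivFin V v : ℕ) : ℤ) := by positivity
      omega
  · intro u v huv
    dsimp only
    have hne : ((Fintype.equivFin V u : ℕ) : ℤ) ≠ ((Fintype.equivFin V v : ℕ) : ℤ) := by
      simp only [ne_eq, Nat.cast_inj, Fin.val_eq_val, EmbeddingLike.apply_eq_iff_eq]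
      exact G.ne_of_adj huv
    have h0u : (0:ℤ) ≤ ((Fintype.equivFin V u : ℕ) : ℤ) := by positivity
    have h0v : (0:ℤ) ≤ ((Fintype.equivFin V v : ℕ) : ℤ) := by positivity
    rcases Int.units_eq_one_or (σ s(u,v)) with hσ | hσ <;> rw [hσ] <;>
      simp only [Units.val_one, Units.val_neg, one_mul, neg_mul] <;> intro h <;> omega

lemma chiPM_le (G : SimpleGraph V) (σ : Sym2 V → ℤˣ) {n : ℕ} (c : V → ℤ)
    (h : IsPMColoring G σ n c) : chiPM G σ ≤ n :=
  Nat.sInf_le ⟨c, h⟩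

lemma chiPM_spec [Fintype V] (G : SimpleGraph V) (σ : Sym2 V → ℤˣ) :
    ∃ c : V → ℤ, IsPMColoring G σ (chiPM G σ) c :=
  Nat.sInf_mem ⟨_, chiPMSet_nonempty G σ⟩

lemma chiPM_le_bound [Fintype V] (G : SimpleGraph V) (σ : Sym2 V → ℤˣ) :
    chiPM G σ ≤ 2 * Fintype.card V :=
  Nat.sInf_le (chiPMSet_nonempty G σ)

lemma stepPM [Fintype V] (G : SimpleGraph V) (σ σ' : Sym2 V → ℤˣ) (a : Sym2 V)
    (hagree : ∀ x, x ≠ a → σ x = σ' x) : chiPM G σ ≤ chiPM G σ' + 1 := by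
  classical
  obtain ⟨c, hmem, hcol⟩ := chiPM_spec G σ'
  set n := chiPM G σ' with hndef
  have hε : ∀ (e : Sym2 V), (σ e : ℤ) = 1 ∨ (σ e : ℤ) = -1 := by
    intro e
    rcases Int.units_eq_one_or (σ e) with h | h <;> rw [h] <;> simp
  induction a using Sym2.ind with
  | h u v =>
  by_cases hadj : G.Adj u v
  case neg =>
    have hσeq : ∀ x y, G.Adj x y → σ s(x,y) = σ' s(x,y) := by
      intro x y hxy
      apply hagree
      intro h
      rcases Sym2.eq_iff.mp h with ⟨rfl, rfl⟩ | ⟨rfl, rfl⟩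
      · exact hadj hxy
      · exact hadj hxy.symm
    have : chiPM G σ ≤ n := by
      apply chiPM_le G σ c
      refine ⟨hmem, fun x y hxy => ?_⟩
      rw [hσeq x y hxy]
      exact hcol x y hxy
    omega
  case pos =>
  have hσeq2 : ∀ x y, x ≠ u → y ≠ u → (σ s(x,y) : ℤ) = (σ' s(x,y) : ℤ) := by
    intro x y hx hy
    rw [hagree]
    intro h
    rcases Sym2.eq_iff.mp h with ⟨rfl, rfl⟩ | ⟨rfl, rfl⟩
    · exact hx rfl
    · exact hy rfl
  rcases Nat.even_or_odd n with hpar | hpar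
  · -- n even : recolor u to 0
    have hnz : ∀ w, c w ≠ 0 := by
      intro w h0
      exact (Nat.not_odd_iff_even.mpr hpar) ((hmem w).2 h0)
    apply chiPM_le G σ (Function.update c u 0)
    constructor
    · intro w
      by_cases hw : w = u
      · subst hw
        rw [Function.update_self]
        exact ⟨by simp; positivity, fun _ => Even.add_one hpar⟩
      · rw [Function.update_of_ne hw]
        refine ⟨le_trans (hmem w).1 (by push_cast; linarith), fun h0 => absurd h0 (hnz w)⟩
    · intro x y hxy
      by_cases hx : x = u
      · subst hx
        have hy : y ≠ x := fun h => hxy.ne h.symm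
        rw [Function.update_self, Function.update_of_ne hy]
        rcases hε s(x,y) with hσ1 | hσ1 <;> rw [hσ1] <;>
          [simp only [one_mul]; simp only [neg_mul, one_mul]]
        · exact fun h => hnz y h.symm
        · intro h
          exact hnz y (by linarith [h])
      · by_cases hy : y = u
        · subst hy
          rw [Function.update_self, Function.update_of_ne hx]
          rcases hε s(x,y) with hσ1 | hσ1 <;> rw [hσ1] <;> simp <;> exact hnz x
        · rw [Function.update_of_ne hx, Function.update_of_ne hy, hσeq2 x y hx hy]
          exact hcol x y hxy
  · -- n odd : new extreme colors ±β
    set tn : ℕ := n / 2 with htn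
    have hn2 : (n:ℤ) = 2 * (tn:ℤ) + 1 := by
      rw [htn]
      obtain ⟨r, hr⟩ := hpar
      push_cast
      omega
    set β : ℤ := (tn:ℤ) + 1 with hβ
    have hβpos : 0 < β := by positivity
    have habsc : ∀ w, -(tn:ℤ) ≤ c w ∧ c w ≤ (tn:ℤ) := by
      intro w
      have h := (hmem w).1
      have h' : |c w| ≤ (tn:ℤ) := by omega
      exact abs_le.mp h'
    set c₂ : V → ℤ := fun x => if x = u then -β else
      if c x = 0 then (if G.Adj u x ∧ (σ s(u,x) : ℤ) = -1 then -β else β) else c x with hc₂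
    have hc2u : c₂ u = -β := by simp [hc₂]
    have hc2n : ∀ w, w ≠ u → c w ≠ 0 → c₂ w = c w := by
      intro w h1 h2; simp [hc₂, h1, h2]
    have hc2zn : ∀ w, w ≠ u → c w = 0 → (G.Adj u w ∧ (σ s(u,w) : ℤ) = -1) → c₂ w = -β := by
      intro w h1 h2 h3; have h4 : σ s(u,w) = -1 := Units.ext (by rw [h3.2]; simp)
      simp [hc₂, h1, h2, h3.1, h3.2, h4]
    have hc2zp : ∀ w, w ≠ u → c w = 0 → ¬(G.Adj u w ∧ (σ s(u,w) : ℤ) = -1) → c₂ w = β := by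
      intro w h1 h2 h3; simp [hc₂, h1, h2, h3]
      intro h4 h5; exact absurd ⟨h4, by rw [h5]; simp⟩ h3
    have hc2z : ∀ w, w ≠ u → c w = 0 → c₂ w = -β ∨ c₂ w = β := by
      intro w h1 h2
      by_cases h3 : G.Adj u w ∧ (σ s(u,w) : ℤ) = -1
      · left; exact hc2zn w h1 h2 h3
      · right; exact hc2zp w h1 h2 h3
    apply chiPM_le G σ c₂
    constructor
    · intro w
      by_cases hw : w = u
      · subst hw
        rw [hc2u]
        refine ⟨by rw [abs_neg, abs_of_pos hβpos]; omega, fun h0 => absurd h0 (by omega)⟩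
      · by_cases hz : c w = 0
        · rcases hc2z w hw hz with h | h <;> rw [h]
          · exact ⟨by rw [abs_neg, abs_of_pos hβpos]; omega, fun h0 => absurd h0 (by omega)⟩
          · exact ⟨by rw [abs_of_pos hβpos]; omega, fun h0 => absurd h0 (by omega)⟩
        · rw [hc2n w hw hz]
          exact ⟨le_trans (hmem w).1 (by push_cast; linarith), fun h0 => absurd h0 hz⟩
    · -- adjacency
      have caseU : ∀ y, G.Adj u y → c₂ u ≠ (σ s(u,y) : ℤ) * c₂ y := by
        intro y hxy
        have hy : y ≠ u := fun h => hxy.ne' h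
        rw [hc2u]
        by_cases hz : c y = 0
        · rcases hε s(u,y) with hσ1 | hσ1
          · have h3 : ¬(G.Adj u y ∧ (σ s(u,y) : ℤ) = -1) := by
              rintro ⟨-, h4⟩; rw [hσ1] at h4; norm_num at h4
            rw [hc2zp y hy hz h3, hσ1, one_mul]
            omega
          · rw [hc2zn y hy hz ⟨hxy, hσ1⟩, hσ1]
            intro h; omega
        · rw [hc2n y hy hz]
          obtain ⟨hb1, hb2⟩ := habsc y
          rcases hε s(u,y) with hσ1 | hσ1 <;> rw [hσ1] <;> intro h <;> omega
      intro x y hxy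
      by_cases hx : x = u
      · subst hx; exact caseU y hxy
      · by_cases hy : y = u
        · subst hy
          have h1 := caseU x hxy.symm
          rw [show s(x,y) = s(y,x) from Sym2.eq_swap]
          intro h2
          apply h1
          rcases hε s(y,x) with hσ1 | hσ1 <;> rw [hσ1] at h2 ⊢ <;> omega
        · -- both differ from u
          by_cases hzx : c x = 0
          · by_cases hzy : c y = 0
            · exfalso
              have := hcol x y hxy
              rw [hzx, hzy] at this
              simp at this
            · rw [hc2n y hy hzy]
              obtain ⟨hb1, hb2⟩ := habsc y
              rcases hc2z x hx hzx with h | h <;> rw [h] <;>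
                rcases hε s(x,y) with hσ1 | hσ1 <;> rw [hσ1] <;> intro h2 <;> omega
          · by_cases hzy : c y = 0
            · rw [hc2n x hx hzx]
              obtain ⟨hb1, hb2⟩ := habsc x
              rcases hc2z y hy hzy with h | h <;> rw [h] <;>
                rcases hε s(x,y) with hσ1 | hσ1 <;> rw [hσ1] <;> intro h2 <;> omega
            · rw [hc2n x hx hzx, hc2n y hy hzy, hσeq2 x y hx hy]
              exact hcol x y hxy

/-- Discrete intermediate value theorem along one-point flips of signatures. -/
lemma chain_ivt {ι : Type*} [Fintype ι] (f : (ι → ℤˣ) → ℕ)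
    (hstep : ∀ σ τ : ι → ℤˣ, ∀ a : ι, (∀ x, x ≠ a → σ x = τ x) → f τ ≤ f σ + 1) :
    ∀ σ τ : ι → ℤˣ, ∀ m : ℕ, f σ ≤ m → m ≤ f τ → ∃ ρ, f ρ = m := by
  classical
  intro σ τ
  generalize hcard : (Finset.univ.filter (fun x => σ x ≠ τ x)).card = n
  induction n generalizing σ with
  | zero =>
    intro m h1 h2
    have heq : σ = τ := by
      funext x
      by_contra hx
      have : x ∈ Finset.univ.filter (fun x => σ x ≠ τ x) := by simp [hx]
      rw [Finset.card_eq_zero] at hcard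
      simp [hcard] at this
    subst heq
    exact ⟨σ, le_antisymm h1 h2⟩
  | succ n ih =>
    intro m h1 h2
    have hne : (Finset.univ.filter (fun x => σ x ≠ τ x)).Nonempty := by
      rw [← Finset.card_pos, hcard]; omega
    obtain ⟨a, ha⟩ := hne
    rw [Finset.mem_filter] at ha
    set σ₁ : ι → ℤˣ := Function.update σ a (τ a) with hσ₁
    have hagree : ∀ x, x ≠ a → σ x = σ₁ x := by
      intro x hx
      rw [hσ₁, Function.update_of_ne hx]
    have hstep1 : f σ₁ ≤ f σ + 1 := hstep σ σ₁ a hagree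
    have hcard1 : (Finset.univ.filter (fun x => σ₁ x ≠ τ x)).card = n := by
      have hsub : (Finset.univ.filter (fun x => σ₁ x ≠ τ x)) =
          (Finset.univ.filter (fun x => σ x ≠ τ x)).erase a := by
        ext x
        simp only [Finset.mem_filter, Finset.mem_erase, Finset.mem_univ, true_and]
        constructor
        · intro hx
          have hxa : x ≠ a := by
            rintro rfl
            apply hx
            rw [hσ₁, Function.update_self]
          rw [hσ₁, Function.update_of_ne hxa] at hx
          exact ⟨hxa, hx⟩
        · rintro ⟨hxa, hx⟩
          rw [hσ₁, Function.update_of_ne hxa]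
          exact hx
      rw [hsub, Finset.card_erase_of_mem (by simp [ha.2]), hcard]
      omega
    by_cases hm : f σ₁ ≤ m
    · exact ih σ₁ hcard1 m hm h2
    · push_neg at hm
      have : f σ = m := by omega
      exact ⟨σ, this⟩

lemma spectrum_interval {ι : Type*} [Fintype ι] (f : (ι → ℤˣ) → ℕ)
    (B : ℕ) (hB : ∀ σ, f σ ≤ B)
    (hstep : ∀ σ τ : ι → ℤˣ, ∀ a : ι, (∀ x, x ≠ a → σ x = τ x) → f τ ≤ f σ + 1) :
    {m : ℕ | ∃ σ : ι → ℤˣ, f σ = m} =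
      Set.Icc (sInf {m : ℕ | ∃ σ : ι → ℤˣ, f σ = m})
        (sSup {m : ℕ | ∃ σ : ι → ℤˣ, f σ = m}) := by
  classical
  set S := {m : ℕ | ∃ σ : ι → ℤˣ, f σ = m} with hS
  have hne : S.Nonempty := ⟨f (fun _ => 1), ⟨_, rfl⟩⟩
  have hbdd : BddAbove S := by
    refine ⟨B, ?_⟩
    rintro m ⟨σ, rfl⟩
    exact hB σ
  have hInf := Nat.sInf_mem hne
  have hSup := Nat.sSup_mem hne hbdd
  ext m
  constructor
  · intro hm
    exact ⟨Nat.sInf_le hm, le_csSup hbdd hm⟩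
  · rintro ⟨h1, h2⟩
    obtain ⟨σ0, hσ0⟩ := hInf
    obtain ⟨σ1, hσ1⟩ := hSup
    obtain ⟨ρ, hρ⟩ := chain_ivt f hstep σ0 σ1 m (hσ0.symm ▸ h1) (hσ1.symm ▸ h2)
    exact ⟨ρ, hρ⟩

end ChromaticSpectrumAux

/-- The chromatic spectrum of a graph `G` with respect to the modular chromatic
number `χ` and with respect to `χ±` is an interval of integers. -/
theorem chromatic_spectrum_is_interval {V : Type*} [Fintype V] (G : SimpleGraph V) :
    {m : ℕ | ∃ σ : Sym2 V → ℤˣ, chiMod G σ = m} =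
        Set.Icc (sInf {m : ℕ | ∃ σ : Sym2 V → ℤˣ, chiMod G σ = m})
          (sSup {m : ℕ | ∃ σ : Sym2 V → ℤˣ, chiMod G σ = m}) ∧
      {m : ℕ | ∃ σ : Sym2 V → ℤˣ, chiPM G σ = m} =
        Set.Icc (sInf {m : ℕ | ∃ σ : Sym2 V → ℤˣ, chiPM G σ = m})
          (sSup {m : ℕ | ∃ σ : Sym2 V → ℤˣ, chiPM G σ = m}) := by
  classical
  constructor
  · exact spectrum_interval (fun σ => chiMod G σ) (2 * Fintype.card V + 2)
      (fun σ => chiMod_le_bound G σ)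
      (fun σ τ a h => stepMod G τ σ a (fun x hx => (h x hx).symm))
  · exact spectrum_interval (fun σ => chiPM G σ) (2 * Fintype.card V)
      (fun σ => chiPM_le_bound G σ)
      (fun σ τ a h => stepPM G τ σ a (fun x hx => (h x hx).symm))
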